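/- Started from a quasi-stationary distribution μ, the pair (X_{τ_ℰ - 1}, X_{τ_ℰ}) consisting of the last state visited in I before absorption and the absorption state is independent of the absorption time τ_ℰ; moreover ℙ_μ(X_{τ_ℰ-1} = i, X_{τ_ℰ} = ε) = P(i,ε) μ(i) (1-γ)^{-1}. -/

import Mathlib

open Finset Matrix

/-- Started from a q.s.d. μ, the pair (X_{τ_ℰ-1}, X_{τ_ℰ}) is independent of
τ_ℰ, and ℙ_μ(X_{τ_ℰ-1}=i, X_{τ_ℰ}=ε) = P(i,ε) μ(i) (1-γ)⁻¹. Here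
ℙ_μ(X_{τ_ℰ-1}=i, X_{τ_ℰ}=ε, τ_ℰ=n) = (μᵀ P_I^{n-1})(i)·P(i,ε), the marginal of the pair is
the sum over n ≥ 1 of these, and ℙ_μ(τ_ℰ = n) = ℙ_μ(τ_ℰ > n-1) - ℙ_μ(τ_ℰ > n)
with ℙ_μ(τ_ℰ > k) = ∑_j (μᵀ P_I^k)(j). -/
theorem qsd_pair_independent_of_absorption_time {I E : Type*} [Fintype I] [Fintype E]
    [DecidableEq I] [DecidableEq E] [Nonempty I] [Nonempty E]
    (P : Matrix (I ⊕ E) (I ⊕ E) ℝ)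
    (PI : Matrix I I ℝ) (hPI : PI = P.submatrix Sum.inl Sum.inl)
    (hP0 : ∀ a b, 0 ≤ P a b)
    (hP1 : ∀ a, ∑ b, P a b = 1)
    (habs : ∀ (ε : E) (b : I ⊕ E), P (Sum.inr ε) b = if b = Sum.inr ε then 1 else 0)
    (hirr : ∀ i j : I, ∃ n : ℕ, 0 < (PI ^ n) i j)
    (hsub : 0 < ∑ i : I, ∑ ε : E, P (Sum.inl i) (Sum.inr ε))
    (μ : I → ℝ) (hμ0 : ∀ i, 0 ≤ μ i) (hμ1 : ∑ i, μ i = 1)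
    (γ : ℝ) (hγ : 0 < γ ∧ γ < 1)
    (hqsd : μ ᵥ* PI = γ • μ) :
    ∀ (i : I) (ε : E),
      -- marginal law of the pair (last state in I, absorption state)
      (∑' m : ℕ, (μ ᵥ* (PI ^ m)) i * P (Sum.inl i) (Sum.inr ε))
        = P (Sum.inl i) (Sum.inr ε) * μ i * (1 - γ)⁻¹
      ∧ -- independence: joint law = (pair marginal) × (law of τ_ℰ)
      ∀ n : ℕ, 1 ≤ n →
        (μ ᵥ* (PI ^ (n - 1))) i * P (Sum.inl i) (Sum.inr ε)
          = (∑' m : ℕ, (μ ᵥ* (PI ^ m)) i * P (Sum.inl i) (Sum.inr ε))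
            * ((∑ j : I, (μ ᵥ* (PI ^ (n - 1))) j) - ∑ j : I, (μ ᵥ* (PI ^ n)) j) := by
  have hpow : ∀ m : ℕ, μ ᵥ* (PI ^ m) = γ ^ m • μ := by
    intro m
    induction m with
    | zero => simp
    | succ m ih =>
      rw [pow_succ, ← vecMul_vecMul, ih, smul_vecMul, hqsd, smul_smul, pow_succ]
  intro i ε
  have hγ1 : |γ| < 1 := by
    rw [abs_of_pos hγ.1]; exact hγ.2
  have hsum : (∑' m : ℕ, (μ ᵥ* (PI ^ m)) i * P (Sum.inl i) (Sum.inr ε))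
      = P (Sum.inl i) (Sum.inr ε) * μ i * (1 - γ)⁻¹ := by
    have : ∀ m : ℕ, (μ ᵥ* (PI ^ m)) i * P (Sum.inl i) (Sum.inr ε)
        = γ ^ m * (μ i * P (Sum.inl i) (Sum.inr ε)) := by
      intro m; rw [hpow m]; simp [Pi.smul_apply, smul_eq_mul]; ring
    simp_rw [this]
    rw [tsum_mul_right, tsum_geometric_of_lt_one (le_of_lt hγ.1) hγ.2]
    ring
  refine ⟨hsum, ?_⟩
  intro n hn
  rw [hsum]
  obtain ⟨k, rfl⟩ : ∃ k, n = k + 1 := ⟨n - 1, (Nat.succ_pred_eq_of_pos hn).symm⟩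
  simp only [Nat.add_sub_cancel]
  rw [hpow k, hpow (k + 1)]
  simp only [Pi.smul_apply, smul_eq_mul, ← Finset.mul_sum, hμ1]
  rw [pow_succ]
  have h1γ : (1 : ℝ) - γ ≠ 0 := by linarith [hγ.2]
  field_simp
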